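/- Let c ∈ ℝ, r > 0, ε > 0 and α(ε) = (e^ε + 1)/(e^ε − 1). Suppose γ1 < γ2 are real numbers and p : [c−r, c+r] → [0,1] (interpreted as p(w) = P(Q(w) = γ1) for a binary-output stochastic quantizer Q with output levels γ1, γ2) satisfy: (C1, unbiasedness) p(w)·γ1 + (1−p(w))·γ2 = w for all w ∈ [c−r, c+r]; (C2, ε-LDP) p(w) ≤ e^ε·p(w′) and 1−p(w) ≤ e^ε·(1−p(w′)) for all w, w′ ∈ [c−r, c+r]; (C3, minimal MSE) for every triple (γ1′, γ2′, p′) with γ1′ < γ2′ satisfying C1 and C2, one has p(w)·γ1² + (1−p(w))·γ2² − w² ≤ p′(w)·γ1′² + (1−p′(w))·γ2′² − w² for every w ∈ [c−r, c+r]. Then necessarily γ1 = c − r·α(ε), γ2 = c + r·α(ε), and p(w) = 1/2 − (w−c)/(2r·α(ε)) for all w ∈ [c−r, c+r]. -/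

import Mathlib

open Real Set

/-- `α(ε) = (e^ε + 1)/(e^ε − 1)`. -/
noncomputable def alphaFn (ε : ℝ) : ℝ := (Real.exp ε + 1) / (Real.exp ε - 1)

set_option maxHeartbeats 1000000 in
/-- any binary-output stochastic quantizer on `[c−r, c+r]` which is unbiased (C1),
`ε`-LDP (C2), and has pointwise minimal MSE among all such quantizers (C3) must be the
LDP-FL quantizer: output levels `c ± r·α(ε)` with `P(output = c − r·α(ε)) = 1/2 − (w−c)/(2rα(ε))`. -/
theorem stmt0 (c r ε : ℝ) (hr : 0 < r) (hε : 0 < ε)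
    (γ1 γ2 : ℝ) (p : ℝ → ℝ) (hγ : γ1 < γ2)
    (hp01 : ∀ w ∈ Icc (c - r) (c + r), p w ∈ Icc (0 : ℝ) 1)
    (hC1 : ∀ w ∈ Icc (c - r) (c + r), p w * γ1 + (1 - p w) * γ2 = w)
    (hC2 : ∀ w ∈ Icc (c - r) (c + r), ∀ w' ∈ Icc (c - r) (c + r),
      p w ≤ Real.exp ε * p w' ∧ 1 - p w ≤ Real.exp ε * (1 - p w'))
    (hC3 : ∀ (γ1' γ2' : ℝ) (p' : ℝ → ℝ), γ1' < γ2' →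
      (∀ w ∈ Icc (c - r) (c + r), p' w ∈ Icc (0 : ℝ) 1) →
      (∀ w ∈ Icc (c - r) (c + r), p' w * γ1' + (1 - p' w) * γ2' = w) →
      (∀ w ∈ Icc (c - r) (c + r), ∀ w' ∈ Icc (c - r) (c + r),
        p' w ≤ Real.exp ε * p' w' ∧ 1 - p' w ≤ Real.exp ε * (1 - p' w')) →
      ∀ w ∈ Icc (c - r) (c + r),
        p w * γ1 ^ 2 + (1 - p w) * γ2 ^ 2 - w ^ 2 ≤
          p' w * γ1' ^ 2 + (1 - p' w) * γ2' ^ 2 - w ^ 2) :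
    γ1 = c - r * alphaFn ε ∧ γ2 = c + r * alphaFn ε ∧
      ∀ w ∈ Icc (c - r) (c + r), p w = 1 / 2 - (w - c) / (2 * r * alphaFn ε) := by
  set E := Real.exp ε with hEdef
  have hE : 1 < E := by rw [hEdef, ← Real.exp_zero]; exact Real.exp_lt_exp.mpr hε
  have hE1 : 0 < E - 1 := by linarith
  have hα1 : 1 < alphaFn ε := by
    rw [alphaFn, lt_div_iff₀ hE1]; linarith
  have hαE : alphaFn ε * (E - 1) = E + 1 := by
    rw [alphaFn, ← hEdef, div_mul_cancel₀ _ hE1.ne']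
  set A := r * alphaFn ε with hAdef
  have hrA : r < A := by nlinarith
  have hA : 0 < A := by linarith
  have h2A : (0:ℝ) < 2 * A := by linarith
  have hAE : A * (E - 1) = r * (E + 1) := by
    rw [hAdef]; linear_combination r * hαE
  -- the candidate quantizer
  set q : ℝ → ℝ := fun w => (A - (w - c)) / (2 * A) with hq
  have hq1 : ∀ x : ℝ, 1 - q x = (A + (x - c)) / (2 * A) := by
    intro x; simp only [hq]; field_simp; ring
  have hq01 : ∀ w ∈ Icc (c - r) (c + r), q w ∈ Icc (0:ℝ) 1 := by
    intro w hw
    obtain ⟨h1, h2⟩ := hw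
    constructor
    · apply div_nonneg _ (le_of_lt h2A); linarith
    · rw [hq]; rw [div_le_one h2A]; linarith
  have hqC1 : ∀ w ∈ Icc (c - r) (c + r),
      q w * (c - A) + (1 - q w) * (c + A) = w := by
    intro w _
    simp only [hq]
    field_simp
    ring
  have hqC2 : ∀ w ∈ Icc (c - r) (c + r), ∀ w' ∈ Icc (c - r) (c + r),
      q w ≤ E * q w' ∧ 1 - q w ≤ E * (1 - q w') := by
    intro w hw w' hw'
    obtain ⟨hw1, hw2⟩ := hw
    obtain ⟨hw1', hw2'⟩ := hw'
    constructor
    · show (A - (w - c)) / (2 * A) ≤ E * ((A - (w' - c)) / (2 * A))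
      rw [mul_div_assoc', div_le_div_iff₀ h2A h2A]
      nlinarith [hAE, mul_nonneg (by linarith : (0:ℝ) ≤ E) (by linarith : (0:ℝ) ≤ c + r - w')]
    · rw [hq1 w, hq1 w']
      rw [mul_div_assoc', div_le_div_iff₀ h2A h2A]
      nlinarith [hAE, mul_nonneg (by linarith : (0:ℝ) ≤ E) (by linarith : (0:ℝ) ≤ w' - (c - r))]
  -- memberships
  have hw0 : c - r ∈ Icc (c - r) (c + r) := ⟨le_refl _, by linarith⟩
  have hw1 : c + r ∈ Icc (c - r) (c + r) := ⟨by linarith, le_refl _⟩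
  have hwc : c ∈ Icc (c - r) (c + r) := ⟨by linarith, by linarith⟩
  -- MSE identity
  have key : ∀ w ∈ Icc (c - r) (c + r),
      p w * γ1 ^ 2 + (1 - p w) * γ2 ^ 2 - w ^ 2 = (γ2 - w) * (w - γ1) := by
    intro w hw
    linear_combination (γ1 + γ2) * (hC1 w hw)
  -- LDP lower bounds on the levels
  have e0 := hC1 (c - r) hw0
  have e1 := hC1 (c + r) hw1
  have hγ2A : A ≤ γ2 - c := by
    have t := (hC2 (c - r) hw0 (c + r) hw1).1
    have m := mul_le_mul_of_nonneg_right t (by linarith : (0:ℝ) ≤ γ2 - γ1)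
    nlinarith [hAE, e0, e1, m]
  have hγ1A : A ≤ c - γ1 := by
    have t := (hC2 (c + r) hw1 (c - r) hw0).2
    have m := mul_le_mul_of_nonneg_right t (by linarith : (0:ℝ) ≤ γ2 - γ1)
    nlinarith [hAE, e0, e1, m]
  -- optimality at w = c
  have h3 := hC3 (c - A) (c + A) q (by linarith) hq01 hqC1 hqC2 c hwc
  have hRHS : q c * (c - A) ^ 2 + (1 - q c) * (c + A) ^ 2 - c ^ 2 = A ^ 2 := by
    rw [hq1 c]; simp only [hq]; field_simp; ring
  have hM : (γ2 - c) * (c - γ1) ≤ A ^ 2 := by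
    rw [← key c hwc]; rw [hRHS] at h3; exact h3
  have hg2 : γ2 = c + A := by
    have h1 : γ2 ≤ c + A := by nlinarith [hM, hγ2A, hγ1A, hA]
    linarith
  have hg1 : γ1 = c - A := by
    have h1 : c - A ≤ γ1 := by nlinarith [hM, hγ2A, hγ1A, hA]
    linarith
  refine ⟨by rw [hg1], by rw [hg2], ?_⟩
  intro w hw
  have h := hC1 w hw
  rw [hg1, hg2] at h
  have hpw : p w = (A - (w - c)) / (2 * A) := by
    rw [eq_div_iff (ne_of_gt h2A)]; linear_combination -h
  rw [hpw, hAdef]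
  have hαpos : (0:ℝ) < alphaFn ε := by linarith
  field_simp
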